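/- For every integer k ≥ 1, the following identity of natural numbers holds: ∑_{i=1}^{k} C(2i,i) + ∑_{i=0}^{k} 2^i + ∑_{i=1}^{k-1} ∑_{j=i}^{k} C(k+i,j) = C(2k+2,k+1) − 1 + ∑_{i=1}^{k-1} C(2i,i). (This is the count of series involved in the system S_0 of Proposition 3.1: it equals f(k) := C(2k+2,k+1) − 1 + ∑_{i=1}^{k-1} C(2i,i).) -/

import Mathlib

open Finset

lemma geom2 (n : ℕ) : (∑ i ∈ range n, 2 ^ i) + 1 = 2 ^ n := by
  induction n with
  | zero => simp
  | succ n ih => rw [Finset.sum_range_succ]; rw [pow_succ]; omega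

lemma pascal_sum (n m : ℕ) :
    ∑ j ∈ range (m + 1), Nat.choose (n + 1) j
      = ∑ j ∈ range (m + 1), Nat.choose n j + ∑ j ∈ range m, Nat.choose n j := by
  induction m with
  | zero => simp
  | succ m ih =>
      rw [Finset.sum_range_succ (f := fun j => Nat.choose (n+1) j), ih,
        Finset.sum_range_succ (f := fun j => Nat.choose n j) (n := m+1),
        Finset.sum_range_succ (f := fun j => Nat.choose n j) (n := m),
        Nat.choose_succ_succ]
      ring

lemma telescope (k : ℕ) : ∀ m : ℕ,
    ∑ i ∈ range m, ∑ j ∈ range (i + 1), Nat.choose (k + i + 1) j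
      = ∑ j ∈ range m, Nat.choose (k + m + 1) j := by
  intro m
  induction m with
  | zero => simp
  | succ m ih =>
      rw [Finset.sum_range_succ, ih]
      have h : k + (m + 1) + 1 = (k + m + 1) + 1 := by ring
      rw [h, pascal_sum (k + m + 1) m]
      ring

lemma symm_sum (n a : ℕ) (h : a ≤ n + 1) :
    ∑ j ∈ range a, Nat.choose n j = ∑ j ∈ Finset.Icc (n + 1 - a) n, Nat.choose n j := by
  apply Finset.sum_nbij' (i := fun j => n - j) (j := fun j => n - j)
  · intro x hx
    simp only [Finset.mem_range] at hx
    simp only [Finset.mem_Icc]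
    omega
  · intro x hx
    simp only [Finset.mem_Icc] at hx
    simp only [Finset.mem_range]
    omega
  · intro x hx
    simp only [Finset.mem_range] at hx
    omega
  · intro x hx
    simp only [Finset.mem_Icc] at hx
    omega
  · intro x hx
    simp only [Finset.mem_range] at hx
    rw [Nat.choose_symm (by omega)]

lemma split_sum (n a : ℕ) (h : a ≤ n + 1) :
    ∑ j ∈ range a, Nat.choose n j + ∑ j ∈ Finset.Icc a n, Nat.choose n j = 2 ^ n := by
  rw [← Finset.Ico_add_one_right_eq_Icc a n, ← Nat.sum_range_choose n, Finset.range_eq_Ico, Finset.range_eq_Ico]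
  exact Finset.sum_Ico_consecutive (fun j => Nat.choose n j) (m := 0) (n := a) (k := n + 1) (by omega) (by omega)

lemma geom_shift (c : ℕ) : ∀ m : ℕ,
    (∑ i ∈ Finset.Icc 1 m, 2 ^ (c + i)) + 2 ^ (c + 1) = 2 ^ (c + m + 1) := by
  intro m
  induction m with
  | zero => simp
  | succ m ih =>
      rw [Finset.sum_Icc_succ_top (by omega)]
      have h1 : c + (m + 1) + 1 = (c + m + 1) + 1 := by ring
      have h2 : c + (m + 1) = c + m + 1 := by ring
      rw [h1, h2, pow_succ]
      omega

theorem sum_count_eq_f (k : ℕ) (hk : 1 ≤ k) :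
    (∑ i ∈ Finset.Icc 1 k, Nat.choose (2 * i) i)
      + (∑ i ∈ Finset.Icc 0 k, 2 ^ i)
      + (∑ i ∈ Finset.Icc 1 (k - 1), ∑ j ∈ Finset.Icc i k, Nat.choose (k + i) j)
    = Nat.choose (2 * k + 2) (k + 1) - 1
      + ∑ i ∈ Finset.Icc 1 (k - 1), Nat.choose (2 * i) i := by
  obtain ⟨m, rfl⟩ : ∃ m, k = m + 1 := ⟨k - 1, by omega⟩
  simp only [Nat.add_sub_cancel]
  set a := ∑ i ∈ Finset.Icc 1 m, Nat.choose (2 * i) i with ha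
  have h1 : ∑ i ∈ Finset.Icc 1 (m + 1), Nat.choose (2 * i) i
      = a + Nat.choose (2 * (m + 1)) (m + 1) :=
    Finset.sum_Icc_succ_top (by omega) _
  have h2 : (∑ i ∈ Finset.Icc 0 (m + 1), 2 ^ i) + 1 = 2 ^ (m + 2) := by
    rw [← Finset.Ico_add_one_right_eq_Icc 0 (m+1), ← Finset.range_eq_Ico]
    exact geom2 (m + 2)
  have h3 : ∀ i ∈ Finset.Icc 1 m,
      (∑ j ∈ Finset.Icc i (m + 1), Nat.choose (m + 1 + i) j)
        + 2 * ∑ j ∈ range i, Nat.choose (m + 1 + i) j = 2 ^ (m + 1 + i) := by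
    intro i hi
    simp only [Finset.mem_Icc] at hi
    have hs : ∑ j ∈ range i, Nat.choose (m + 1 + i) j
        = ∑ j ∈ Finset.Icc (m + 2) (m + 1 + i), Nat.choose (m + 1 + i) j := by
      have := symm_sum (m + 1 + i) i (by omega)
      rwa [show m + 1 + i + 1 - i = m + 2 by omega] at this
    have hsplit := split_sum (m + 1 + i) i (by omega)
    have hsplit2 : ∑ j ∈ Finset.Icc i (m + 1 + i), Nat.choose (m + 1 + i) j
        = ∑ j ∈ Finset.Icc i (m + 1), Nat.choose (m + 1 + i) j
          + ∑ j ∈ Finset.Icc (m + 2) (m + 1 + i), Nat.choose (m + 1 + i) j := by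
      rw [← Finset.Ico_add_one_right_eq_Icc i (m+1+i), ← Finset.Ico_add_one_right_eq_Icc i (m+1),
        ← Finset.Ico_add_one_right_eq_Icc (m+2) (m+1+i)]
      exact (Finset.sum_Ico_consecutive _ (by omega) (by omega)).symm
    omega
  have h4 : (∑ i ∈ Finset.Icc 1 m, ∑ j ∈ Finset.Icc i (m + 1), Nat.choose (m + 1 + i) j)
      + 2 * ∑ i ∈ Finset.Icc 1 m, ∑ j ∈ range i, Nat.choose (m + 1 + i) j
      = ∑ i ∈ Finset.Icc 1 m, 2 ^ (m + 1 + i) := by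
    rw [Finset.mul_sum, ← Finset.sum_add_distrib]
    exact Finset.sum_congr rfl h3
  have h5 : ∑ i ∈ Finset.Icc 1 m, ∑ j ∈ range i, Nat.choose (m + 1 + i) j
      = ∑ j ∈ range m, Nat.choose (2 * m + 2) j := by
    rw [show (2:ℕ) * m + 2 = (m + 1) + m + 1 by ring, ← telescope (m + 1) m,
      ← Finset.Ico_add_one_right_eq_Icc 1 m, Finset.sum_Ico_eq_sum_range]
    apply Finset.sum_congr
    · norm_num
    · intro i _
      have e1 : 1 + i = i + 1 := by omega
      rw [e1, show m + 1 + (i + 1) = m + 1 + i + 1 by ring]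
  have h6 : (∑ i ∈ Finset.Icc 1 m, 2 ^ (m + 1 + i)) + 2 ^ (m + 2) = 2 ^ (2 * m + 2) := by
    have := geom_shift (m + 1) m
    rwa [show m + 1 + m + 1 = 2 * m + 2 by ring] at this
  have h7 : ∑ j ∈ range (m + 1), Nat.choose (2 * m + 2) j
        + (∑ j ∈ range (m + 1), Nat.choose (2 * m + 2) j + Nat.choose (2 * m + 2) (m + 1))
      = 2 ^ (2 * m + 2) := by
    have hsym := symm_sum (2 * m + 2) (m + 1) (by omega)
    rw [show 2 * m + 2 + 1 - (m + 1) = m + 2 by omega] at hsym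
    have hsp := split_sum (2 * m + 2) (m + 1) (by omega)
    have hsp2 : ∑ j ∈ Finset.Icc (m + 1) (2 * m + 2), Nat.choose (2 * m + 2) j
        = Nat.choose (2 * m + 2) (m + 1)
          + ∑ j ∈ Finset.Icc (m + 2) (2 * m + 2), Nat.choose (2 * m + 2) j := by
      rw [← Finset.Ico_add_one_right_eq_Icc (m+1) (2*m+2), ← Finset.Ico_add_one_right_eq_Icc (m+2) (2*m+2)]
      rw [Finset.sum_eq_sum_Ico_succ_bot (by omega : m + 1 < 2*m+2+1)]
    omega
  have h8 : Nat.choose (2 * (m + 1)) (m + 1) = Nat.choose (2 * m + 2) (m + 1) := by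
    rw [show 2 * (m + 1) = 2 * m + 2 by ring]
  have h8b : ∑ j ∈ range (m + 1), Nat.choose (2 * m + 2) j
      = ∑ j ∈ range m, Nat.choose (2 * m + 2) j + Nat.choose (2 * m + 2) m :=
    Finset.sum_range_succ _ m
  have h9 : Nat.choose (2 * (m + 1) + 2) (m + 1 + 1)
      = 2 * Nat.choose (2 * m + 2) m + 2 * Nat.choose (2 * m + 2) (m + 1) := by
    rw [show 2 * (m + 1) + 2 = (2 * m + 3) + 1 by ring,
      Nat.choose_succ_succ (2 * m + 3) (m + 1)]
    have hsy : Nat.choose (2 * m + 3) (m + 2) = Nat.choose (2 * m + 3) (m + 1) := by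
      have := Nat.choose_symm (n := 2 * m + 3) (k := m + 2) (by omega)
      rw [show 2 * m + 3 - (m + 2) = m + 1 by omega] at this
      exact this.symm
    rw [Nat.succ_eq_add_one, show m + 1 + 1 = m + 2 by ring, hsy,
      show (2:ℕ) * m + 3 = 2 * m + 2 + 1 by ring, Nat.choose_succ_succ]
    ring
  have h10 : 1 ≤ Nat.choose (2 * m + 2) (m + 1) := Nat.choose_pos (by omega)
  omega
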